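/- arXiv:2103.07743 — 3 statements merged into one kernel-verified Lean document; each statement's English description precedes it below -/
import Mathlib

section
/- Let y(t) = ∑_{j=1}^{N} γ_j e^{2πα_j t} with γ_j, α_j ∈ ℝ \ {0}, P > 0, and define the modified Fourier coefficient c̃_k(y) = Re c_k(y) + (i/k) Im c_k(y) for k ∈ ℤ \ {0}. Then c̃_k(y) = ∑_{j=1}^{N} (A_j + iB_j)/(k² + C_j), i.e., c̃_k(y) = r_N(k²) where r_N(z) = ∑_{j=1}^{N} (A_j + iB_j)/(z + C_j), with A_j, B_j, C_j as in the rational representation of c_k(y). -/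
open Complex Finset

/-- The `k`-th Fourier coefficient of `y` on the interval `[0, P]`. -/
noncomputable def expFourierCoeff (P : ℝ) (φ : ℝ → ℂ) (k : ℤ) : ℂ :=
  (1 / (P : ℂ)) * ∫ t in (0:ℝ)..P,
    φ t * Complex.exp (-2 * (Real.pi : ℂ) * Complex.I * (k : ℂ) * (t : ℂ) / (P : ℂ))

/-- The modified `k`-th Fourier coefficient `c̃_k(y) = Re c_k(y) + (i/k) Im c_k(y)`. -/
noncomputable def expModFourierCoeff (P : ℝ) (φ : ℝ → ℂ) (k : ℤ) : ℂ :=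
  ((expFourierCoeff P φ k).re : ℂ) + Complex.I / (k : ℂ) * ((expFourierCoeff P φ k).im : ℂ)

lemma coeff_single (γ α P : ℝ) (hα : α ≠ 0) (hP : 0 < P) (k : ℤ) :
    expFourierCoeff P (fun t => (γ:ℂ) * Complex.exp (2*(Real.pi:ℂ)*(α:ℂ)*(t:ℂ))) k
    = ((γ*P*α/Real.pi * Real.exp (α*Real.pi*P) * Real.sinh (Real.pi*α*P)
          / ((k:ℝ)^2 + α^2*P^2) : ℝ) : ℂ)
      + (((k:ℝ) * (γ/Real.pi * Real.exp (α*Real.pi*P) * Real.sinh (Real.pi*α*P))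
          / ((k:ℝ)^2 + α^2*P^2) : ℝ) : ℂ) * I := by
  have hπ : (Real.pi : ℝ) ≠ 0 := Real.pi_ne_zero
  have hP' : (P:ℝ) ≠ 0 := hP.ne'
  have hPc : (P:ℂ) ≠ 0 := by exact_mod_cast hP'
  set c : ℂ := 2*(Real.pi:ℂ)*(α:ℂ) - 2*(Real.pi:ℂ)*I*(k:ℂ)/(P:ℂ) with hc_def
  have hc : c ≠ 0 := by
    intro h
    have hre : c.re = 2*Real.pi*α := by
      simp [hc_def, Complex.div_re]
    rw [h] at hre
    simp [hπ, hα] at hre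
  have hint : (∫ t in (0:ℝ)..P,
      ((γ:ℂ) * Complex.exp (2*(Real.pi:ℂ)*(α:ℂ)*(t:ℂ)))
        * Complex.exp (-2 * (Real.pi : ℂ) * Complex.I * (k : ℂ) * (t : ℂ) / (P : ℂ)))
      = (γ:ℂ) * ((Complex.exp (c*P) - 1)/c) := by
    have : ∀ t : ℝ, ((γ:ℂ) * Complex.exp (2*(Real.pi:ℂ)*(α:ℂ)*(t:ℂ)))
        * Complex.exp (-2 * (Real.pi : ℂ) * Complex.I * (k : ℂ) * (t : ℂ) / (P : ℂ))
        = (γ:ℂ) * Complex.exp (c * t) := by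
      intro t
      rw [mul_assoc, ← Complex.exp_add]
      ring_nf
      rw [hc_def]
      ring_nf
    simp_rw [this]
    rw [intervalIntegral.integral_const_mul, integral_exp_mul_complex hc]
    simp
  set s := Real.exp (α*Real.pi*P) with hs_def
  have hs : s ≠ 0 := Real.exp_ne_zero _
  have hsc : (s:ℂ) ≠ 0 := by exact_mod_cast hs
  have hexp : Complex.exp (c*P) = ((s^2 : ℝ) : ℂ) := by
    have h1 : c * P = ((2*Real.pi*α*P : ℝ) : ℂ) + ((-k : ℤ):ℂ) * (2*(Real.pi:ℂ)*I) := by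
      rw [hc_def]
      push_cast
      field_simp
      ring
    rw [h1, Complex.exp_add, Complex.exp_int_mul_two_pi_mul_I, mul_one,
      ← Complex.ofReal_exp]
    norm_cast
    rw [hs_def, ← Real.exp_nat_mul]
    ring_nf
  have hsinh : Real.sinh (Real.pi*α*P) = (s - s⁻¹)/2 := by
    rw [Real.sinh_eq, ← Real.exp_neg, hs_def]
    ring_nf
  have hd : ((k:ℝ)^2 + α^2*P^2) ≠ 0 := by positivity
  have hdc : (((k:ℝ)^2 + α^2*P^2 : ℝ) : ℂ) ≠ 0 := by exact_mod_cast hd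
  rw [expFourierCoeff, hint, hexp, hsinh]
  have h2 : (1/(P:ℂ)) * ((γ:ℂ) * ((((s^2:ℝ):ℂ) - 1)/c)) = (γ:ℂ) * (((s^2:ℝ):ℂ) - 1) / (c * P) := by
    field_simp
    try ring
    try tauto
  have hd2 : ((k:ℂ)^2 + (α:ℂ)^2*(P:ℂ)^2) ≠ 0 := by
    intro h
    apply hd
    exact_mod_cast congrArg Complex.re h
  rw [h2, div_eq_iff (mul_ne_zero hc hPc), hc_def]
  push_cast
  field_simp [hd2]
  rw [eq_div_iff (by
    rw [mul_comm ((P:ℂ)^2)]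
    exact hd2)]
  ring_nf
  simp only [Complex.I_sq]
  ring_nf


lemma coeff_sum (N : ℕ) (γ α : Fin N → ℝ) (P : ℝ) (k : ℤ) :
    expFourierCoeff P (fun t => ∑ j : Fin N,
        (γ j : ℂ) * Complex.exp (2 * (Real.pi : ℂ) * (α j : ℂ) * (t : ℂ))) k
    = ∑ j : Fin N, expFourierCoeff P
        (fun t => (γ j : ℂ) * Complex.exp (2 * (Real.pi : ℂ) * (α j : ℂ) * (t : ℂ))) k := by
  unfold expFourierCoeff
  rw [← Finset.mul_sum, ← intervalIntegral.integral_finset_sum]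
  · simp_rw [Finset.sum_mul]
  · intro j _
    apply Continuous.intervalIntegrable
    fun_prop

/-- For a real proper exponential sum `y(t) = ∑_j γ_j e^{2πα_j t}` and `k ≠ 0`, the modified
Fourier coefficient satisfies `c̃_k(y) = ∑_j (A_j + iB_j)/(k² + C_j)`, i.e. it is the value
at `z = k²` of the rational function `r_N(z) = ∑_j (A_j + iB_j)/(z + C_j)`. -/
theorem modFourierCoeff_real_proper_exp_sum (N : ℕ) (γ α : Fin N → ℝ)
    (hγ : ∀ j, γ j ≠ 0) (hα : ∀ j, α j ≠ 0) (P : ℝ) (hP : 0 < P) (k : ℤ) (hk : k ≠ 0) :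
    expModFourierCoeff P
        (fun t => ∑ j : Fin N,
          (γ j : ℂ) * Complex.exp (2 * (Real.pi : ℂ) * (α j : ℂ) * (t : ℂ))) k
      = ∑ j : Fin N,
          (((γ j * P * α j / Real.pi * Real.exp (α j * Real.pi * P)
                * Real.sinh (Real.pi * α j * P) : ℝ) : ℂ)
            + Complex.I * ((γ j / Real.pi * Real.exp (α j * Real.pi * P)
                  * Real.sinh (Real.pi * α j * P) : ℝ) : ℂ))
          / ((k : ℂ) ^ 2 + ((α j ^ 2 * P ^ 2 : ℝ) : ℂ)) := by
  have hkc : (k:ℂ) ≠ 0 := by exact_mod_cast hk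
  set X : Fin N → ℝ := fun j => γ j * P * α j / Real.pi * Real.exp (α j*Real.pi*P)
      * Real.sinh (Real.pi * α j * P) / ((k:ℝ)^2 + α j^2*P^2) with hX
  set Y : Fin N → ℝ := fun j => (k:ℝ) * (γ j / Real.pi * Real.exp (α j*Real.pi*P)
      * Real.sinh (Real.pi * α j * P)) / ((k:ℝ)^2 + α j^2*P^2) with hY
  have hco : expFourierCoeff P (fun t => ∑ j : Fin N,
        (γ j : ℂ) * Complex.exp (2 * (Real.pi : ℂ) * (α j : ℂ) * (t : ℂ))) k
      = ((∑ j, X j : ℝ) : ℂ) + ((∑ j, Y j : ℝ) : ℂ) * I := by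
    rw [coeff_sum]
    push_cast
    rw [Finset.sum_mul, ← Finset.sum_add_distrib]
    exact Finset.sum_congr rfl fun j _ => coeff_single (γ j) (α j) P (hα j) hP k
  rw [expModFourierCoeff, hco]
  simp only [Complex.add_re, Complex.add_im, Complex.ofReal_re, Complex.ofReal_im,
    Complex.mul_re, Complex.mul_im, Complex.I_re, Complex.I_im, mul_zero, mul_one,
    zero_mul, sub_zero, add_zero, zero_add, zero_sub]
  push_cast
  rw [Finset.mul_sum, ← Finset.sum_add_distrib]
  refine Finset.sum_congr rfl fun j _ => ?_
  have hd : ((k:ℝ)^2 + α j^2*P^2) ≠ 0 := by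
    have := hα j
    positivity
  have hdc : ((k:ℂ)^2 + (α j:ℂ)^2*(P:ℂ)^2) ≠ 0 := by
    intro h
    apply hd
    exact_mod_cast congrArg Complex.re h
  simp only [hX, hY]
  have hπc : (Real.pi : ℂ) ≠ 0 := by exact_mod_cast Real.pi_ne_zero
  push_cast
  field_simp [hkc, hπc, hdc]
end

section
/- Let y_j(t) = (∑_{m=0}^{n_j} γ_{j,m} t^m) e^{2πλ_j t} with -iλ_j P ∉ ℤ, P > 0. Then for all k ∈ ℤ, c_k(y_j) = ∑_{ℓ=0}^{n_j} A_{j,ℓ}/(k - C_j)^{ℓ+1}, where C_j = -iλ_j P and A_{j,ℓ} = (ℓ!/(2πi)^{ℓ+1}) · (γ_{j,ℓ} P^ℓ (1 - e^{2πλ_j P}) - e^{2πλ_j P} ∑_{m=ℓ+1}^{n_j} P^m C(m,ℓ) γ_{j,m}). -/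
open Complex Finset intervalIntegral

lemma int_rec (a : ℂ) (ha : a ≠ 0) (P : ℝ) (m : ℕ) :
    ∫ t in (0:ℝ)..P, (t:ℂ)^(m+1) * Complex.exp (a*t)
    = (P:ℂ)^(m+1) * Complex.exp (a*(P:ℂ))/a
      - ((m+1:ℕ):ℂ)/a * ∫ t in (0:ℝ)..P, (t:ℂ)^m * Complex.exp (a*t) := by
  have hderiv : ∀ t : ℝ, HasDerivAt (fun s : ℝ => ((s:ℂ))^(m+1) * Complex.exp (a*(s:ℂ))/a)
      ((t:ℂ)^(m+1) * Complex.exp (a*(t:ℂ)) + ((m+1:ℕ):ℂ)/a * ((t:ℂ)^m * Complex.exp (a*(t:ℂ)))) t := by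
    intro t
    have h : HasDerivAt (fun z : ℂ => z^(m+1) * Complex.exp (a*z)/a)
        ((((m+1:ℕ):ℂ) * (t:ℂ)^m * Complex.exp (a*(t:ℂ)) + (t:ℂ)^(m+1) * (Complex.exp (a*(t:ℂ)) * a))/a)
        (t:ℂ) := by
      have := (((hasDerivAt_pow (m+1) ((t:ℂ))).mul
        (((hasDerivAt_id ((t:ℂ))).const_mul a).cexp)).div_const a)
      simpa using this
    have h2 := h.comp_ofReal
    convert h2 using 1
    field_simp
    ring
  have hint : ∀ j : ℕ, IntervalIntegrable (fun t : ℝ => (t:ℂ)^j * Complex.exp (a*(t:ℂ)))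
      MeasureTheory.volume 0 P := by
    intro j
    apply Continuous.intervalIntegrable
    continuity
  have := intervalIntegral.integral_eq_sub_of_hasDerivAt (f := fun s : ℝ => ((s:ℂ))^(m+1) * Complex.exp (a*(s:ℂ))/a)
    (fun t _ => hderiv t) (((hint (m+1)).add (((hint m)).const_mul (((m+1:ℕ):ℂ)/a))))
  rw [intervalIntegral.integral_add (hint (m+1)) ((hint m).const_mul _)] at this
  simp only [Complex.ofReal_zero, ne_eq] at this
  rw [intervalIntegral.integral_const_mul] at this
  have h0 : ((0:ℂ))^(m+1) * Complex.exp (a*0)/a = 0 := by simp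
  rw [h0] at this
  linear_combination this

lemma int_closed (a : ℂ) (ha : a ≠ 0) (P : ℝ) (m : ℕ) :
    ∫ t in (0:ℝ)..P, (t:ℂ)^m * Complex.exp (a*t)
    = (m.factorial : ℂ)/(-a)^(m+1)
      - Complex.exp (a*(P:ℂ)) * ∑ r ∈ range (m+1),
          ((m.factorial : ℂ)/(((m-r).factorial : ℕ) : ℂ)) * (P:ℂ)^(m-r) / (-a)^(r+1) := by
  have hb : -a ≠ 0 := neg_ne_zero.mpr ha
  induction m with
  | zero =>
      simp only [pow_zero, one_mul]
      rw [integral_exp_mul_complex ha]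
      simp only [Complex.ofReal_zero, mul_zero, Complex.exp_zero, Nat.factorial_zero,
        Nat.cast_one, zero_add, Finset.range_one, Finset.sum_singleton, Nat.sub_zero,
        pow_one, pow_zero, mul_one, div_one]
      field_simp
      ring
  | succ m ih =>
      rw [int_rec a ha P m, ih]
      have hsum : ∑ r ∈ range (m+2),
          (((m+1).factorial : ℂ)/((((m+1)-r).factorial : ℕ) : ℂ)) * (P:ℂ)^((m+1)-r) / (-a)^(r+1)
          = (P:ℂ)^(m+1)/(-a) + ((m+1:ℕ):ℂ)/(-a) * ∑ r ∈ range (m+1),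
              ((m.factorial : ℂ)/(((m-r).factorial : ℕ) : ℂ)) * (P:ℂ)^(m-r) / (-a)^(r+1) := by
        rw [Finset.sum_range_succ']
        have h0 : (((m+1).factorial : ℂ)/((((m+1)-0).factorial : ℕ) : ℂ)) * (P:ℂ)^((m+1)-0) / (-a)^(0+1)
            = (P:ℂ)^(m+1)/(-a) := by
          have : ((m+1).factorial : ℂ) ≠ 0 := Nat.cast_ne_zero.mpr (Nat.factorial_ne_zero _)
          rw [Nat.sub_zero, zero_add, pow_one, div_self this, one_mul]
        rw [h0, Finset.mul_sum]
        have hterm : ∀ r ∈ range (m+1),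
            (((m+1).factorial : ℂ)/((((m+1)-(r+1)).factorial : ℕ) : ℂ)) * (P:ℂ)^((m+1)-(r+1)) / (-a)^(r+1+1)
            = ((m+1:ℕ):ℂ)/(-a) * (((m.factorial : ℂ)/(((m-r).factorial : ℕ) : ℂ)) * (P:ℂ)^(m-r) / (-a)^(r+1)) := by
          intro r hr
          have hmr : (m+1)-(r+1) = m - r := by omega
          rw [hmr]
          have hfac : (((m+1).factorial : ℕ) : ℂ) = ((m+1:ℕ):ℂ) * (m.factorial : ℂ) := by
            rw [Nat.factorial_succ]; push_cast; ring
          rw [hfac]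
          have hne : (((m-r).factorial : ℕ) : ℂ) ≠ 0 := Nat.cast_ne_zero.mpr (Nat.factorial_ne_zero _)
          field_simp
          ring
        rw [Finset.sum_congr rfl hterm]
        ring
      rw [hsum]
      have hfac : (((m+1).factorial : ℕ) : ℂ) = ((m+1:ℕ):ℂ) * (m.factorial : ℂ) := by
        rw [Nat.factorial_succ]; push_cast; ring
      rw [hfac]
      field_simp
      ring
lemma sum_swap_tri {M : Type*} [AddCommMonoid M] (n : ℕ) (f : ℕ → ℕ → M) :
    ∑ m ∈ range (n+1), ∑ r ∈ range (m+1), f m r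
    = ∑ r ∈ range (n+1), ∑ m ∈ Finset.Icc r n, f m r := by
  rw [Finset.sum_comm' (t' := range (n+1)) (s' := fun r => Finset.Icc r n)]
  intro m r
  simp [Finset.mem_range, Finset.mem_Icc]
  omega

lemma final_alg (E g F W p v u w : ℂ) (hp : p ≠ 0) (hv : v ≠ 0) (hu : u ≠ 0) (hw : w ≠ 0) :
    1/p * (g * (F/u) - (E * g * (F/1*1/u) + E*F/(v*u)*W))
    = F/w * (g*v*(1-E) - E*W) / (u*(v*p)/w) := by
  simp only [div_eq_mul_inv, one_mul, mul_one, one_div, mul_inv, inv_inv]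
  linear_combination (-(g*F*u⁻¹*p⁻¹*(1-E))) * mul_inv_cancel₀ hv
    + (-(F*(g*v - g*v*E - E*W)*u⁻¹*v⁻¹*p⁻¹)) * mul_inv_cancel₀ hw


/-- For an extended exponential term `y_j(t) = (∑_{m≤n} γ_m t^m)e^{2πλt}` with
`-iλP ∉ ℤ`, the Fourier coefficients satisfy
`c_k(y_j) = ∑_{ℓ=0}^n A_ℓ/(k - C)^{ℓ+1}`. -/
theorem fourierCoeff_extended_term_rational (n : ℕ) (γ : ℕ → ℂ) (lam : ℂ)
    (P : ℝ) (hP : 0 < P)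
    (hlam : ∀ z : ℤ, -Complex.I * lam * (P : ℂ) ≠ (z : ℂ)) (k : ℤ) :
    expFourierCoeff P
        (fun t => (∑ m ∈ Finset.range (n + 1), γ m * (t : ℂ) ^ m)
          * Complex.exp (2 * (Real.pi : ℂ) * lam * (t : ℂ))) k
      = ∑ l ∈ Finset.range (n + 1),
          ((Nat.factorial l : ℂ) / (2 * (Real.pi : ℂ) * Complex.I) ^ (l + 1)
              * (γ l * (P : ℂ) ^ l
                    * (1 - Complex.exp (2 * (Real.pi : ℂ) * lam * (P : ℂ)))
                  - Complex.exp (2 * (Real.pi : ℂ) * lam * (P : ℂ))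
                    * ∑ m ∈ Finset.Icc (l + 1) n,
                        (P : ℂ) ^ m * (Nat.choose m l : ℂ) * γ m))
            / ((k : ℂ) - (-Complex.I * lam * (P : ℂ))) ^ (l + 1) := by
  have hP' : (P:ℂ) ≠ 0 := Complex.ofReal_ne_zero.mpr hP.ne'
  have hπ : ((Real.pi:ℝ) : ℂ) ≠ 0 := Complex.ofReal_ne_zero.mpr Real.pi_ne_zero
  have h2πI : 2 * ((Real.pi:ℝ):ℂ) * Complex.I ≠ 0 := by
    simp [Complex.I_ne_zero, hπ]
  set a : ℂ := 2*((Real.pi:ℝ):ℂ)*lam - 2*((Real.pi:ℝ):ℂ)*Complex.I*(k:ℂ)/(P:ℂ) with ha_def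
  have ha : a ≠ 0 := by
    intro h
    apply hlam k
    rw [ha_def] at h
    have h' : 2*((Real.pi:ℝ):ℂ)*lam*(P:ℂ) = 2*((Real.pi:ℝ):ℂ)*Complex.I*(k:ℂ) := by
      field_simp at h
      linear_combination h
    have h2 : lam*(P:ℂ) = Complex.I*(k:ℂ) := by
      apply mul_left_cancel₀ (show (2*((Real.pi:ℝ):ℂ)) ≠ 0 from by simp [hπ])
      linear_combination h'
    linear_combination (-Complex.I)*h2 + (-(k:ℂ))*Complex.I_sq
  set E : ℂ := Complex.exp (2 * ((Real.pi:ℝ) : ℂ) * lam * (P : ℂ)) with hE_def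
  have haP : a * (P:ℂ) = 2*((Real.pi:ℝ):ℂ)*lam*(P:ℂ) - 2*((Real.pi:ℝ):ℂ)*Complex.I*(k:ℂ) := by
    rw [ha_def]; field_simp
  have hEa : Complex.exp (a * (P:ℂ)) = E := by
    rw [haP, Complex.exp_sub, hE_def]
    rw [show 2*((Real.pi:ℝ):ℂ)*Complex.I*(k:ℂ) = (k:ℤ) * (2*((Real.pi:ℝ):ℂ)*Complex.I) by push_cast; ring]
    rw [Complex.exp_int_mul_two_pi_mul_I]
    simp
  have hD : (k:ℂ) - (-Complex.I * lam * (P:ℂ)) ≠ 0 :=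
    sub_ne_zero.mpr (Ne.symm (hlam k))
  have hDrel : a * (P:ℂ) = -(2*((Real.pi:ℝ):ℂ)*Complex.I) * ((k:ℂ) - (-Complex.I * lam * (P:ℂ))) := by
    rw [haP]
    linear_combination (2*((Real.pi:ℝ):ℂ)*lam*(P:ℂ))*Complex.I_sq
  have hDval : (k:ℂ) - (-Complex.I * lam * (P:ℂ)) = -(a * (P:ℂ) / (2*((Real.pi:ℝ):ℂ)*Complex.I)) := by
    rw [hDrel]
    field_simp
  have hint_eq : ∀ t : ℝ,
      ((∑ m ∈ range (n+1), γ m * (t:ℂ)^m) * Complex.exp (2*((Real.pi:ℝ):ℂ)*lam*(t:ℂ)))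
        * Complex.exp (-2 * ((Real.pi:ℝ):ℂ) * Complex.I * (k:ℂ) * (t:ℂ) / (P:ℂ))
      = ∑ m ∈ range (n+1), γ m * ((t:ℂ)^m * Complex.exp (a*(t:ℂ))) := by
    intro t
    rw [Finset.sum_mul, Finset.sum_mul]
    apply Finset.sum_congr rfl
    intro m _
    rw [mul_assoc, mul_assoc, ← Complex.exp_add]
    congr 2
    rw [ha_def]
    field_simp
    ring
  clear_value a E
  unfold expFourierCoeff
  rw [intervalIntegral.integral_congr (g := fun t : ℝ => ∑ m ∈ range (n+1), γ m * ((t:ℂ)^m * Complex.exp (a*(t:ℂ)))) (fun t _ => hint_eq t)]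
  rw [intervalIntegral.integral_finset_sum (fun m _ => by
    apply Continuous.intervalIntegrable
    continuity : ∀ m ∈ range (n+1), IntervalIntegrable (fun t : ℝ => γ m * ((t:ℂ)^m * Complex.exp (a*(t:ℂ)))) MeasureTheory.volume 0 P)]
  simp_rw [intervalIntegral.integral_const_mul, int_closed a ha P, hEa]
  have hb : -a ≠ 0 := neg_ne_zero.mpr ha
  have step1 : ∀ m ∈ range (n+1),
      γ m * ((m.factorial:ℂ)/(-a)^(m+1)
        - E * ∑ r ∈ range (m+1), ((m.factorial:ℂ)/(((m-r).factorial:ℕ):ℂ)) * (P:ℂ)^(m-r) / (-a)^(r+1))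
      = γ m * ((m.factorial:ℂ)/(-a)^(m+1))
        - ∑ r ∈ range (m+1), E * γ m * (((m.factorial:ℂ)/(((m-r).factorial:ℕ):ℂ)) * (P:ℂ)^(m-r) / (-a)^(r+1)) := by
    intro m _
    rw [mul_sub, ← mul_assoc, Finset.mul_sum]
    congr 1
    exact Finset.sum_congr rfl (fun r _ => by ring)
  rw [Finset.sum_congr rfl step1, Finset.sum_sub_distrib,
    sum_swap_tri n (fun m r => E * γ m * (((m.factorial:ℂ)/(((m-r).factorial:ℕ):ℂ)) * (P:ℂ)^(m-r) / (-a)^(r+1))),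
    ← Finset.sum_sub_distrib, Finset.mul_sum]
  apply Finset.sum_congr rfl
  intro l hl
  have hln : l ≤ n := Nat.lt_succ_iff.mp (Finset.mem_range.mp hl)
  rw [← Finset.Ioc_insert_left hln, Finset.sum_insert (by simp), ← Finset.Icc_add_one_left_eq_Ioc]
  have hterm : ∀ m ∈ Finset.Icc (l+1) n,
      E * γ m * (((m.factorial:ℂ)/(((m-l).factorial:ℕ):ℂ)) * (P:ℂ)^(m-l)/(-a)^(l+1))
      = E * (l.factorial:ℂ)/((P:ℂ)^l * (-a)^(l+1)) * ((P:ℂ)^m * (m.choose l:ℂ) * γ m) := by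
    intro m hm
    have hlm : l ≤ m := le_trans (Nat.le_succ l) (Finset.mem_Icc.mp hm).1
    have hfac : (m.factorial:ℂ) = (m.choose l:ℂ) * (l.factorial:ℂ) * (((m-l).factorial:ℕ):ℂ) := by
      exact_mod_cast congrArg (fun x : ℕ => (x:ℂ)) (Nat.choose_mul_factorial_mul_factorial hlm).symm
    have hpow : (P:ℂ)^(m-l) * (P:ℂ)^l = (P:ℂ)^m := by rw [← pow_add]; congr 1; omega
    have hfacne : (((m-l).factorial:ℕ):ℂ) ≠ 0 := Nat.cast_ne_zero.mpr (Nat.factorial_ne_zero _)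
    rw [hfac, ← hpow]
    set b : ℂ := -a with hbdef
    clear_value b
    field_simp [hb]
  rw [Finset.sum_congr rfl hterm, ← Finset.mul_sum]
  simp only [Nat.sub_self, Nat.factorial_zero, pow_zero, Nat.cast_one]
  have hDval2 : (k:ℂ) - (-Complex.I * lam * (P:ℂ)) = (-a) * (P:ℂ) / (2*((Real.pi:ℝ):ℂ)*Complex.I) := by
    rw [hDval]; ring
  have hDpow : ((k:ℂ) - (-Complex.I * lam * (P:ℂ)))^(l+1)
      = (-a)^(l+1) * (P:ℂ)^(l+1) / (2*((Real.pi:ℝ):ℂ)*Complex.I)^(l+1) := by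
    rw [hDval2, div_pow, mul_pow]
  rw [hDpow, pow_succ (P:ℂ) l]
  exact final_alg E (γ l) _ _ _ _ _ _ hP' (pow_ne_zero _ hP') (pow_ne_zero _ hb) (pow_ne_zero _ h2πI)
end

section
/- Let y_j(t) = (∑_{m=0}^{n_j} γ_{j,m} t^m) e^{2πλ_j t} with -iλ_j P = k_j ∈ ℤ, P > 0. Then c_{k_j}(y_j) = ∑_{ℓ=0}^{n_j} γ_{j,ℓ} P^ℓ/(ℓ+1), and for every k ∈ ℤ with k ≠ k_j, c_k(y_j) = ∑_{ℓ=0}^{n_j-1} A*_{j,ℓ}/(k - k_j)^{ℓ+1}, where A*_{j,ℓ} = -(ℓ!/(2πi)^{ℓ+1}) ∑_{m=ℓ+1}^{n_j} P^m C(m,ℓ) γ_{j,m}. -/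
open Complex Finset

noncomputable def Acoef (c : ℂ) (m ℓ : ℕ) : ℂ :=
  (-1)^ℓ * (Nat.factorial m : ℂ) / ((Nat.factorial (m - ℓ) : ℂ) * c^(ℓ+1))

lemma telescope (c : ℂ) (hc : c ≠ 0) (m : ℕ) (x : ℂ) :
    ∑ ℓ ∈ range (m+1),
      (c * (Acoef c m ℓ * x^(m-ℓ)) + Acoef c m ℓ * (((m-ℓ : ℕ) : ℂ) * x^(m-ℓ-1)))
    = x^m := by
  have key : ∀ ℓ ∈ range (m+1),
      c * (Acoef c m ℓ * x^(m-ℓ)) + Acoef c m ℓ * (((m-ℓ : ℕ) : ℂ) * x^(m-ℓ-1))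
      = (fun ℓ => if ℓ ≤ m then c * Acoef c m ℓ * x^(m-ℓ) else 0) ℓ
        - (fun ℓ => if ℓ ≤ m then c * Acoef c m ℓ * x^(m-ℓ) else 0) (ℓ+1) := by
    intro ℓ hℓ
    simp only [mem_range] at hℓ
    have hℓm : ℓ ≤ m := Nat.lt_succ_iff.mp hℓ
    rcases eq_or_lt_of_le hℓm with rfl | hlt
    · simp [Nat.sub_self]
    · obtain ⟨d, hd⟩ : ∃ d, m = ℓ + (d+1) := ⟨m - ℓ - 1, by omega⟩
      subst hd
      have h1 : ℓ + (d+1) - ℓ = d + 1 := by omega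
      have h2 : ℓ + (d+1) - (ℓ+1) = d := by omega
      have h3 : ℓ + (d+1) - ℓ - 1 = d := by omega
      have hdfac : (Nat.factorial d : ℂ) ≠ 0 := by exact_mod_cast (Nat.factorial_pos d).ne'
      have hA : (((d:ℂ)+1)) * Acoef c (ℓ+(d+1)) ℓ = -c * Acoef c (ℓ+(d+1)) (ℓ+1) := by
        unfold Acoef
        rw [h1, h2]
        have hfac : (Nat.factorial (d+1) : ℂ) = ((d:ℂ)+1) * Nat.factorial d := by
          push_cast [Nat.factorial_succ]; ring
        rw [hfac]
        have hd1 : ((d:ℂ)+1) ≠ 0 := Nat.cast_add_one_ne_zero d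
        field_simp
        ring
      simp only [h1, h2, h3, if_pos hℓm, if_pos (by omega : ℓ + 1 ≤ ℓ + (d+1))]
      push_cast
      calc c * (Acoef c (ℓ+(d+1)) ℓ * x^(d+1)) + Acoef c (ℓ+(d+1)) ℓ * (((d:ℂ)+1) * x^d)
          = c * Acoef c (ℓ+(d+1)) ℓ * x^(d+1)
            + (((d:ℂ)+1) * Acoef c (ℓ+(d+1)) ℓ) * x^d := by ring
        _ = _ := by rw [hA]; ring
  rw [Finset.sum_congr rfl key, Finset.sum_range_sub']
  simp only [if_pos (Nat.zero_le m), if_neg (by omega : ¬ (m+1 ≤ m)), Nat.sub_zero, sub_zero]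
  unfold Acoef
  have hfm : (Nat.factorial m : ℂ) ≠ 0 := by exact_mod_cast (Nat.factorial_pos m).ne'
  rw [Nat.sub_zero]
  field_simp
  ring

lemma hasDerivAt_anti (c : ℂ) (hc : c ≠ 0) (m : ℕ) (x : ℝ) :
    HasDerivAt (fun t : ℝ => Complex.exp (c * t) * ∑ ℓ ∈ range (m+1), Acoef c m ℓ * (t:ℂ)^(m-ℓ))
      ((x:ℂ)^m * Complex.exp (c * x)) x := by
  have hE : HasDerivAt (fun t : ℝ => Complex.exp (c * t)) (c * Complex.exp (c * x)) x := by
    have : HasDerivAt (fun z : ℂ => Complex.exp (c * z)) (c * Complex.exp (c * x)) (x : ℂ) := by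
      simpa [mul_comm] using ((hasDerivAt_id (x:ℂ)).const_mul c).cexp
    exact this.comp_ofReal
  have hS : HasDerivAt (fun t : ℝ => ∑ ℓ ∈ range (m+1), Acoef c m ℓ * (t:ℂ)^(m-ℓ))
      (∑ ℓ ∈ range (m+1), Acoef c m ℓ * (((m-ℓ : ℕ) : ℂ) * (x:ℂ)^(m-ℓ-1))) x := by
    apply HasDerivAt.fun_sum
    intro ℓ _
    have : HasDerivAt (fun z : ℂ => Acoef c m ℓ * z^(m-ℓ))
        (Acoef c m ℓ * (((m-ℓ : ℕ) : ℂ) * (x:ℂ)^(m-ℓ-1))) (x:ℂ) :=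
      (hasDerivAt_pow (m-ℓ) (x:ℂ)).const_mul _
    exact this.comp_ofReal
  have := hE.mul hS
  refine this.congr_deriv (Eq.symm ?_)
  have tel := telescope c hc m (x:ℂ)
  calc (x:ℂ)^m * Complex.exp (c * x)
      = Complex.exp (c * x) *
        ∑ ℓ ∈ range (m+1), (c * (Acoef c m ℓ * (x:ℂ)^(m-ℓ))
          + Acoef c m ℓ * (((m-ℓ : ℕ) : ℂ) * (x:ℂ)^(m-ℓ-1))) := by rw [tel]; ring
    _ = _ := by
        rw [Finset.sum_add_distrib, mul_add]
        congr 1 <;>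
          (simp only [Finset.mul_sum]; exact Finset.sum_congr rfl fun ℓ _ => by ring)

lemma integral_pow_mul_exp (c : ℂ) (hc : c ≠ 0) (P : ℝ) (m : ℕ) :
    (∫ t in (0:ℝ)..P, (t:ℂ)^m * Complex.exp (c * t))
      = Complex.exp (c * P) * ∑ ℓ ∈ range (m+1), Acoef c m ℓ * (P:ℂ)^(m-ℓ)
        - (-1:ℂ)^m * (Nat.factorial m : ℂ) / c^(m+1) := by
  have hcont : Continuous (fun t : ℝ => (t:ℂ)^m * Complex.exp (c * t)) := by
    exact (Complex.continuous_ofReal.pow m).mul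
      ((continuous_const.mul Complex.continuous_ofReal).cexp)
  rw [intervalIntegral.integral_eq_sub_of_hasDerivAt
      (fun x _ => hasDerivAt_anti c hc m x) (hcont.intervalIntegrable 0 P)]
  have h0 : (∑ ℓ ∈ range (m+1), Acoef c m ℓ * (0:ℂ)^(m-ℓ))
      = (-1:ℂ)^m * (Nat.factorial m : ℂ) / c^(m+1) := by
    rw [Finset.sum_eq_single m]
    · simp [Acoef, Nat.sub_self]
    · intro ℓ hℓ hne
      simp only [mem_range] at hℓ
      have : m - ℓ ≠ 0 := by omega
      simp [zero_pow this]
    · simp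
  simp [h0]

-- triangular sum swap
lemma tri_swap (n : ℕ) (f : ℕ → ℕ → ℂ) :
    ∑ m ∈ range (n+1), ∑ ℓ ∈ range m, f m ℓ
      = ∑ ℓ ∈ range n, ∑ m ∈ Finset.Icc (ℓ+1) n, f m ℓ := by
  induction n with
  | zero => simp
  | succ n ih =>
    rw [Finset.sum_range_succ, ih]
    have h1 : ∀ ℓ ∈ range (n+1),
        ∑ m ∈ Finset.Icc (ℓ+1) (n+1), f m ℓ
          = (∑ m ∈ Finset.Icc (ℓ+1) n, f m ℓ) + f (n+1) ℓ := by
      intro ℓ hℓ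
      simp only [mem_range] at hℓ
      exact Finset.sum_Icc_succ_top (by omega) _
    rw [Finset.sum_congr rfl h1, Finset.sum_add_distrib]
    congr 1
    rw [Finset.sum_range_succ]
    simp [Finset.Icc_eq_empty_of_lt (by omega : n < n + 1)]


/-- For a `P`-periodic extended exponential term `y_j(t) = (∑_{m≤n} γ_m t^m)e^{2πλt}`
with `-iλP = k_j ∈ ℤ`: `c_{k_j}(y_j) = ∑_{ℓ=0}^n γ_ℓ P^ℓ/(ℓ+1)`, and for `k ≠ k_j`,
`c_k(y_j) = ∑_{ℓ=0}^{n-1} A*_ℓ/(k-k_j)^{ℓ+1}` with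
`A*_ℓ = -(ℓ!/(2πi)^{ℓ+1}) ∑_{m=ℓ+1}^n P^m C(m,ℓ) γ_m`. -/
theorem fourierCoeff_extended_term_periodic (n : ℕ) (γ : ℕ → ℂ) (lam : ℂ)
    (P : ℝ) (hP : 0 < P) (kj : ℤ)
    (hlam : -Complex.I * lam * (P : ℂ) = (kj : ℂ)) :
    expFourierCoeff P
        (fun t => (∑ m ∈ Finset.range (n + 1), γ m * (t : ℂ) ^ m)
          * Complex.exp (2 * (Real.pi : ℂ) * lam * (t : ℂ))) kj
      = ∑ l ∈ Finset.range (n + 1), γ l * (P : ℂ) ^ l / ((l : ℂ) + 1)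
    ∧ ∀ k : ℤ, k ≠ kj →
        expFourierCoeff P
            (fun t => (∑ m ∈ Finset.range (n + 1), γ m * (t : ℂ) ^ m)
              * Complex.exp (2 * (Real.pi : ℂ) * lam * (t : ℂ))) k
          = ∑ l ∈ Finset.range n,
              (-((Nat.factorial l : ℂ) / (2 * (Real.pi : ℂ) * Complex.I) ^ (l + 1))
                  * ∑ m ∈ Finset.Icc (l + 1) n,
                      (P : ℂ) ^ m * (Nat.choose m l : ℂ) * γ m)
                / ((k : ℂ) - (kj : ℂ)) ^ (l + 1) := by
  have hPc : (P:ℂ) ≠ 0 := by exact_mod_cast hP.ne'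
  have hlam2 : lam * (P:ℂ) = Complex.I * (kj:ℂ) := by
    linear_combination Complex.I * hlam + lam * (P:ℂ) * Complex.I_mul_I
  -- exponent combination
  have hcomb : ∀ (k:ℤ) (t:ℝ),
      (∑ m ∈ Finset.range (n + 1), γ m * (t : ℂ) ^ m)
          * Complex.exp (2 * (Real.pi : ℂ) * lam * (t : ℂ))
          * Complex.exp (-2 * (Real.pi : ℂ) * Complex.I * (k : ℂ) * (t : ℂ) / (P : ℂ))
        = ∑ m ∈ Finset.range (n + 1),
            γ m * ((t:ℂ)^m * Complex.exp
              ((2 * (Real.pi : ℂ) * Complex.I * ((kj:ℂ) - (k:ℂ)) / (P:ℂ)) * (t:ℂ))) := by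
    intro k t
    rw [mul_assoc, ← Complex.exp_add]
    have harg : 2 * (Real.pi : ℂ) * lam * (t : ℂ)
          + (-2 * (Real.pi : ℂ) * Complex.I * (k : ℂ) * (t : ℂ) / (P : ℂ))
        = (2 * (Real.pi : ℂ) * Complex.I * ((kj:ℂ) - (k:ℂ)) / (P:ℂ)) * (t:ℂ) := by
      field_simp
      linear_combination (t:ℂ) * hlam2
    rw [harg, Finset.sum_mul]
    exact Finset.sum_congr rfl fun m _ => by ring
  have hsplit : ∀ (c : ℂ),
      (∫ t in (0:ℝ)..P, ∑ m ∈ Finset.range (n + 1),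
          γ m * ((t:ℂ)^m * Complex.exp (c * (t:ℂ))))
        = ∑ m ∈ Finset.range (n + 1),
            γ m * ∫ t in (0:ℝ)..P, (t:ℂ)^m * Complex.exp (c * (t:ℂ)) := by
    intro c
    rw [intervalIntegral.integral_finset_sum]
    · exact Finset.sum_congr rfl fun m _ => intervalIntegral.integral_const_mul _ _
    · intro m _
      exact (continuous_const.mul ((Complex.continuous_ofReal.pow m).mul
        ((continuous_const.mul Complex.continuous_ofReal).cexp))).intervalIntegrable 0 P
  constructor
  · -- k = kj case
    unfold expFourierCoeff
    simp only [hcomb kj]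
    have hc0 : (2 * (Real.pi : ℂ) * Complex.I * ((kj:ℂ) - (kj:ℂ)) / (P:ℂ)) = 0 := by simp
    rw [hc0, hsplit 0]
    have hint : ∀ m : ℕ, (∫ t in (0:ℝ)..P, (t:ℂ)^m * Complex.exp (0 * (t:ℂ)))
        = (P:ℂ)^(m+1) / ((m:ℂ)+1) := by
      intro m
      simp only [zero_mul, Complex.exp_zero, mul_one]
      simp_rw [← Complex.ofReal_pow]
      rw [intervalIntegral.integral_ofReal, integral_pow]
      push_cast
      ring
    simp_rw [hint]
    rw [Finset.mul_sum]
    refine Finset.sum_congr rfl fun m _ => ?_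
    have hm1 : ((m:ℂ)+1) ≠ 0 := Nat.cast_add_one_ne_zero m
    field_simp [pow_succ]
    ring
  · intro k hk
    have hkk : ((kj:ℂ) - (k:ℂ)) ≠ 0 :=
      sub_ne_zero.mpr (by exact_mod_cast (Ne.symm hk))
    have hpi : (2 * (Real.pi : ℂ) * Complex.I) ≠ 0 := by
      simp [Real.pi_ne_zero, Complex.I_ne_zero]
    set c : ℂ := 2 * (Real.pi : ℂ) * Complex.I * ((kj:ℂ) - (k:ℂ)) / (P:ℂ) with hcdef
    have hcne : c ≠ 0 := div_ne_zero (mul_ne_zero hpi hkk) hPc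
    have hexp1 : Complex.exp (c * (P:ℂ)) = 1 := by
      have harg : c * (P:ℂ) = ((kj - k : ℤ) : ℂ) * (2 * (Real.pi:ℂ) * Complex.I) := by
        rw [hcdef]
        push_cast
        field_simp
      rw [harg, Complex.exp_int_mul_two_pi_mul_I]
    have hIm : ∀ m : ℕ, (∫ t in (0:ℝ)..P, (t:ℂ)^m * Complex.exp (c * (t:ℂ)))
        = ∑ ℓ ∈ Finset.range m, Acoef c m ℓ * (P:ℂ)^(m-ℓ) := by
      intro m
      rw [integral_pow_mul_exp c hcne P m, hexp1, one_mul, Finset.sum_range_succ]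
      have hmm : Acoef c m m * (P:ℂ)^(m-m) = (-1:ℂ)^m * (Nat.factorial m : ℂ) / c^(m+1) := by
        simp [Acoef, Nat.sub_self]
      rw [hmm]
      ring
    unfold expFourierCoeff
    simp only [hcomb k]
    rw [hsplit c]
    simp_rw [hIm]
    rw [Finset.mul_sum]
    have hstep : ∀ m ∈ Finset.range (n+1),
        (1/(P:ℂ)) * (γ m * ∑ ℓ ∈ Finset.range m, Acoef c m ℓ * (P:ℂ)^(m-ℓ))
          = ∑ ℓ ∈ Finset.range m, (1/(P:ℂ)) * γ m * (Acoef c m ℓ * (P:ℂ)^(m-ℓ)) := by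
      intro m _
      rw [Finset.mul_sum, Finset.mul_sum]
      exact Finset.sum_congr rfl fun ℓ _ => by ring
    rw [Finset.sum_congr rfl hstep,
      tri_swap n (fun m ℓ => (1/(P:ℂ)) * γ m * (Acoef c m ℓ * (P:ℂ)^(m-ℓ)))]
    refine Finset.sum_congr rfl fun ℓ hℓ => ?_
    rw [Finset.mul_sum, Finset.sum_div]
    refine Finset.sum_congr rfl fun m hm => ?_
    simp only [Finset.mem_Icc] at hm
    obtain ⟨d, rfl⟩ : ∃ d, m = ℓ + (d+1) := ⟨m - ℓ - 1, by omega⟩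
    have h1 : ℓ + (d+1) - ℓ = d + 1 := by omega
    have hfac : ((ℓ + (d+1)).choose ℓ : ℂ) * (Nat.factorial ℓ : ℂ) * (Nat.factorial (d+1) : ℂ)
        = (Nat.factorial (ℓ + (d+1)) : ℂ) := by
      have := Nat.choose_mul_factorial_mul_factorial (show ℓ ≤ ℓ + (d+1) by omega)
      rw [h1] at this
      exact_mod_cast this
    have hd1fac : ((Nat.factorial (d+1) : ℂ)) ≠ 0 := by
      exact_mod_cast (Nat.factorial_pos (d+1)).ne'
    have hyk : ((kj:ℂ) - (k:ℂ))^(ℓ+1) = (-1:ℂ)^(ℓ+1) * ((k:ℂ) - (kj:ℂ))^(ℓ+1) := by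
      rw [show (kj:ℂ) - (k:ℂ) = -((k:ℂ) - (kj:ℂ)) by ring, neg_pow]
    have hkk' : ((k:ℂ) - (kj:ℂ)) ≠ 0 := sub_ne_zero.mpr (by exact_mod_cast hk)
    have hcpow : c^(ℓ+1) = ((-1:ℂ))^(ℓ+1) * (2 * (Real.pi:ℂ) * Complex.I)^(ℓ+1)
        * ((k:ℂ)-(kj:ℂ))^(ℓ+1) / (P:ℂ)^(ℓ+1) := by
      rw [hcdef, show (kj:ℂ)-(k:ℂ) = -((k:ℂ)-(kj:ℂ)) by ring, div_pow, mul_pow, neg_pow]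
      ring
    unfold Acoef
    rw [h1, hcpow, ← hfac]
    set W : ℂ := 2 * (Real.pi:ℂ) * Complex.I with hW
    set y : ℂ := (k:ℂ) - (kj:ℂ) with hy
    have e1 : W^(ℓ+1) ≠ 0 := pow_ne_zero _ hpi
    have e2 : y^(ℓ+1) ≠ 0 := pow_ne_zero _ hkk'
    have e3 : ((P:ℂ))^(ℓ+1) ≠ 0 := pow_ne_zero _ hPc
    clear_value W y
    clear hW hy hcpow hyk hcdef hcne hexp1 hIm hstep hcomb
    have hWl : W^ℓ ≠ 0 := pow_ne_zero _ hpi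
    have hyl : y^ℓ ≠ 0 := pow_ne_zero _ hkk'
    field_simp
    ring
end
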